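/- arXiv:1604.04443 — 11 statements merged into one kernel-verified Lean document; each statement's English description precedes it below -/
import Mathlib

section
/- Let z : ℝ → V be differentiable at every t ∈ [0,T] with derivative satisfying z'(t) + A z(t) = 0 for all t ∈ [0,T]. Then for every t ∈ [0,T], ‖z(t)‖ ≤ exp(−δ t) · ‖z(0)‖. -/
open RealInnerProductSpace

/-- Decay estimate for the homogeneous equation `z' + A z = 0`:
`‖z(t)‖ ≤ exp(-δ t) ‖z(0)‖` on `[0, T]`. -/
theorem stmt_0 {V : Type*} [NormedAddCommGroup V] [InnerProductSpace ℝ V]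
    [FiniteDimensional ℝ V]
    (A : V →L[ℝ] V) (hA : ∀ x y : V, ⟪A x, y⟫ = ⟪x, A y⟫)
    (δ : ℝ) (hδ : 0 < δ) (hcoer : ∀ v : V, δ * ‖v‖ ^ 2 ≤ ⟪A v, v⟫)
    (T : ℝ) (hT : 0 < T)
    (z : ℝ → V)
    (hdiff : ∀ t ∈ Set.Icc (0 : ℝ) T, DifferentiableAt ℝ z t)
    (heq : ∀ t ∈ Set.Icc (0 : ℝ) T, deriv z t + A (z t) = 0) :
    ∀ t ∈ Set.Icc (0 : ℝ) T, ‖z t‖ ≤ Real.exp (-δ * t) * ‖z 0‖ := by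
  set g : ℝ → ℝ := fun t => Real.exp (2 * δ * t) * ⟪z t, z t⟫ with hg
  have hderiv : ∀ x ∈ Set.Icc (0 : ℝ) T,
      HasDerivAt g (Real.exp (2 * δ * x) *
        (2 * δ * ⟪z x, z x⟫ - 2 * ⟪A (z x), z x⟫)) x := by
    intro x hx
    have hz : HasDerivAt z (deriv z x) x := (hdiff x hx).hasDerivAt
    have hzd : deriv z x = -(A (z x)) := by
      have := heq x hx; linear_combination (norm := module) this
    rw [hzd] at hz
    have hinner : HasDerivAt (fun t => ⟪z t, z t⟫)
        (⟪z x, -(A (z x))⟫ + ⟪-(A (z x)), z x⟫) x := hz.inner ℝ hz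
    have hexp : HasDerivAt (fun t => Real.exp (2 * δ * t))
        (Real.exp (2 * δ * x) * (2 * δ)) x := by
      have h1 : HasDerivAt (fun t : ℝ => 2 * δ * t) (2 * δ) x := by
        simpa using (hasDerivAt_id x).const_mul (2 * δ)
      exact h1.exp
    have := hexp.mul hinner
    convert this using 1
    case e'_4 => rfl
    case e'_5 => rfl
    case e'_8 => rfl
    have hc : ⟪z x, A (z x)⟫ = ⟪A (z x), z x⟫ := real_inner_comm _ _
    rw [inner_neg_left, inner_neg_right, hc]
    ring
  have hanti : AntitoneOn g (Set.Icc 0 T) := by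
    apply antitoneOn_of_deriv_nonpos (convex_Icc 0 T)
    · exact fun x hx => ((hderiv x hx).continuousAt).continuousWithinAt
    · intro x hx
      rw [interior_Icc] at hx
      exact ((hderiv x (Set.mem_Icc_of_Ioo hx)).differentiableAt).differentiableWithinAt
    · intro x hx
      rw [interior_Icc] at hx
      rw [(hderiv x (Set.mem_Icc_of_Ioo hx)).deriv]
      have h1 := hcoer (z x)
      have h2 : ⟪z x, z x⟫ = ‖z x‖ ^ 2 := real_inner_self_eq_norm_sq _
      have h3 : (0:ℝ) < Real.exp (2 * δ * x) := Real.exp_pos _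
      have h4 : 2 * δ * ⟪z x, z x⟫ - 2 * ⟪A (z x), z x⟫ ≤ 0 := by rw [h2]; linarith
      exact mul_nonpos_of_nonneg_of_nonpos h3.le h4
  intro t ht
  have hkey := hanti (Set.left_mem_Icc.mpr hT.le) ht ht.1
  have h0 : g 0 = ‖z 0‖ ^ 2 := by
    simp [hg, real_inner_self_eq_norm_sq]
  have hgt : g t = Real.exp (2 * δ * t) * ‖z t‖ ^ 2 := by
    simp [hg, real_inner_self_eq_norm_sq]
  rw [h0, hgt] at hkey
  have hpos : (0:ℝ) < Real.exp (2 * δ * t) := Real.exp_pos _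
  have hsq : ‖z t‖ ^ 2 ≤ (Real.exp (-δ * t) * ‖z 0‖) ^ 2 := by
    have heq2 : (Real.exp (-δ * t) * ‖z 0‖) ^ 2 = (Real.exp (2 * δ * t))⁻¹ * ‖z 0‖ ^ 2 := by
      rw [mul_pow, sq (Real.exp _), ← Real.exp_add,
        show -δ * t + -δ * t = -(2 * δ * t) by ring, Real.exp_neg]
    rw [heq2]
    have hinv := mul_le_mul_of_nonneg_left hkey (inv_nonneg.mpr hpos.le)
    rwa [← mul_assoc, inv_mul_cancel₀ hpos.ne', one_mul] at hinv
  have h1 : 0 ≤ Real.exp (-δ * t) * ‖z 0‖ := by positivity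
  nlinarith [norm_nonneg (z t)]
end

section
/- Let χ ∈ V and let v : ℝ → V be differentiable on [0,T] with v'(t) + A v(t) = 0 for t ∈ [0,T] and v(T) − v(0) = χ. Let (v^k)_{k∈ℕ} be a sequence of functions ℝ → V, each differentiable on [0,T] with (v^k)'(t) + A v^k(t) = 0 for t ∈ [0,T], and satisfying v^{k+1}(0) = v^k(T) − χ for every k. Then for every k ∈ ℕ, ‖v^k(0) − v(0)‖ ≤ exp(−δ T k) · ‖v^0(0) − v(0)‖. -/
open RealInnerProductSpace

lemma decay_aux {V : Type*} [NormedAddCommGroup V] [InnerProductSpace ℝ V]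
    (A : V →L[ℝ] V)
    (δ : ℝ) (hδ : 0 < δ) (hcoer : ∀ v : V, δ * ‖v‖ ^ 2 ≤ ⟪A v, v⟫)
    (T : ℝ) (hT : 0 < T)
    (w : ℝ → V)
    (hdiff : ∀ t ∈ Set.Icc (0 : ℝ) T, DifferentiableAt ℝ w t)
    (heq : ∀ t ∈ Set.Icc (0 : ℝ) T, deriv w t + A (w t) = 0) :
    ‖w T‖ ≤ Real.exp (-δ * T) * ‖w 0‖ := by
  set g : ℝ → ℝ := fun t => Real.exp (2 * δ * t) * ⟪w t, w t⟫ with hg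
  have hd : ∀ t ∈ Set.Icc (0 : ℝ) T,
      HasDerivAt g (Real.exp (2 * δ * t) *
        (2 * δ * ⟪w t, w t⟫ + (⟪w t, deriv w t⟫ + ⟪deriv w t, w t⟫))) t := by
    intro t ht
    have hw := (hdiff t ht).hasDerivAt
    have he : HasDerivAt (fun t => Real.exp (2 * δ * t)) (Real.exp (2 * δ * t) * (2 * δ)) t := by
      simpa [mul_comm] using (((hasDerivAt_id t).const_mul (2 * δ)).exp)
    have hi : HasDerivAt (fun t => (⟪w t, w t⟫ : ℝ))
        (⟪w t, deriv w t⟫ + ⟪deriv w t, w t⟫) t := hw.inner ℝ hw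
    have := he.mul hi
    refine this.congr_deriv ?_
    ring
  have hderiv_nonpos : ∀ t ∈ Set.Icc (0 : ℝ) T, deriv g t ≤ 0 := by
    intro t ht
    rw [(hd t ht).deriv]
    have hwd : deriv w t = -(A (w t)) := eq_neg_of_add_eq_zero_left (heq t ht)
    have hc := hcoer (w t)
    have hsym : (⟪w t, deriv w t⟫ : ℝ) = ⟪deriv w t, w t⟫ := real_inner_comm _ _
    have hn : (⟪w t, w t⟫ : ℝ) = ‖w t‖ ^ 2 := real_inner_self_eq_norm_sq _
    have hAd : (⟪deriv w t, w t⟫ : ℝ) = -⟪A (w t), w t⟫ := by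
      rw [hwd, inner_neg_left]
    have hfac : 2 * δ * ⟪w t, w t⟫ + (⟪w t, deriv w t⟫ + ⟪deriv w t, w t⟫) ≤ 0 := by
      rw [hsym, hAd, hn]; linarith
    exact mul_nonpos_of_nonneg_of_nonpos (Real.exp_pos _).le hfac
  have hanti : AntitoneOn g (Set.Icc 0 T) := by
    apply antitoneOn_of_deriv_nonpos (convex_Icc 0 T)
    · exact fun t ht => ((hd t ht).differentiableAt.continuousAt).continuousWithinAt
    · intro t ht
      rw [interior_Icc] at ht
      exact ((hd t (Set.mem_Icc_of_Ioo ht)).differentiableAt).differentiableWithinAt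
    · intro t ht
      rw [interior_Icc] at ht
      exact hderiv_nonpos t (Set.mem_Icc_of_Ioo ht)
  have h1 : Real.exp (2 * δ * T) * ‖w T‖ ^ 2 ≤ ‖w 0‖ ^ 2 := by
    have := hanti (Set.left_mem_Icc.mpr hT.le) (Set.right_mem_Icc.mpr hT.le) hT.le
    simpa [hg, real_inner_self_eq_norm_sq] using this
  have key : ‖w T‖ ^ 2 ≤ (Real.exp (-δ * T) * ‖w 0‖) ^ 2 := by
    have e1 : Real.exp (2 * δ * T) * (Real.exp (-δ * T) * Real.exp (-δ * T)) = 1 := by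
      rw [← Real.exp_add, ← Real.exp_add, ← Real.exp_zero]; ring_nf
    nlinarith [Real.exp_pos (2 * δ * T), Real.exp_pos (-δ * T),
      mul_le_mul_of_nonneg_left h1 (mul_pos (Real.exp_pos (-δ * T)) (Real.exp_pos (-δ * T))).le]
  exact (pow_le_pow_iff_left₀ (norm_nonneg _) (by positivity) two_ne_zero).mp key

/-- The full iterative process `v^{k+1}(0) = v^k(T) - χ` for the nonlocal problem
`v' + A v = 0`, `v(T) - v(0) = χ` converges geometrically:
`‖v^k(0) - v(0)‖ ≤ exp(-δ T k) ‖v^0(0) - v(0)‖`. -/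
theorem stmt_2 {V : Type*} [NormedAddCommGroup V] [InnerProductSpace ℝ V]
    [FiniteDimensional ℝ V]
    (A : V →L[ℝ] V) (hA : ∀ x y : V, ⟪A x, y⟫ = ⟪x, A y⟫)
    (δ : ℝ) (hδ : 0 < δ) (hcoer : ∀ v : V, δ * ‖v‖ ^ 2 ≤ ⟪A v, v⟫)
    (T : ℝ) (hT : 0 < T)
    (χ : V) (v : ℝ → V) (vs : ℕ → ℝ → V)
    (hvdiff : ∀ t ∈ Set.Icc (0 : ℝ) T, DifferentiableAt ℝ v t)
    (hveq : ∀ t ∈ Set.Icc (0 : ℝ) T, deriv v t + A (v t) = 0)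
    (hvnl : v T - v 0 = χ)
    (hsdiff : ∀ k : ℕ, ∀ t ∈ Set.Icc (0 : ℝ) T, DifferentiableAt ℝ (vs k) t)
    (hseq : ∀ k : ℕ, ∀ t ∈ Set.Icc (0 : ℝ) T, deriv (vs k) t + A (vs k t) = 0)
    (hiter : ∀ k : ℕ, vs (k + 1) 0 = vs k T - χ) :
    ∀ k : ℕ, ‖vs k 0 - v 0‖ ≤ Real.exp (-δ * T * k) * ‖vs 0 0 - v 0‖ := by
  intro k
  induction k with
  | zero => simp
  | succ k ih =>
    set w : ℝ → V := fun t => vs k t - v t with hw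
    have hwd : ∀ t ∈ Set.Icc (0 : ℝ) T, DifferentiableAt ℝ w t :=
      fun t ht => (hsdiff k t ht).sub (hvdiff t ht)
    have hwe : ∀ t ∈ Set.Icc (0 : ℝ) T, deriv w t + A (w t) = 0 := by
      intro t ht
      have hdw : deriv w t = deriv (vs k) t - deriv v t :=
        deriv_fun_sub (hsdiff k t ht) (hvdiff t ht)
      have h1 := hseq k t ht
      have h2 := hveq t ht
      rw [hw]
      simp only [hdw, map_sub]
      rw [show deriv (fun t => vs k t - v t) t = deriv (vs k) t - deriv v t from hdw, sub_add_sub_comm, h1, h2, sub_zero]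
    have hstep := decay_aux A δ hδ hcoer T hT w hwd hwe
    have heq0 : vs (k + 1) 0 - v 0 = w T := by
      rw [hiter k, ← hvnl, hw]; abel
    rw [heq0]
    calc ‖w T‖ ≤ Real.exp (-δ * T) * ‖w 0‖ := hstep
      _ = Real.exp (-δ * T) * ‖vs k 0 - v 0‖ := rfl
      _ ≤ Real.exp (-δ * T) * (Real.exp (-δ * T * k) * ‖vs 0 0 - v 0‖) :=
          mul_le_mul_of_nonneg_left ih (Real.exp_pos _).le
      _ = Real.exp (-δ * T * (k + 1 : ℕ)) * ‖vs 0 0 - v 0‖ := by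
          rw [← mul_assoc, ← Real.exp_add]
          congr 1
          push_cast
          ring
end

section
/- Let τ > 0 and let z : ℕ → V satisfy the implicit difference scheme (z_{n+1} − z_n)/τ + A z_{n+1} = 0 for all n ∈ ℕ. Then for every n ∈ ℕ, ‖z_n‖ ≤ (1 + τ δ)^{−n} · ‖z_0‖. -/
open RealInnerProductSpace

/-- A priori estimate for the fully implicit scheme
`(z_{n+1} - z_n)/τ + A z_{n+1} = 0`: `‖z_n‖ ≤ (1 + τ δ)^{-n} ‖z_0‖`. -/
theorem stmt_4 {V : Type*} [NormedAddCommGroup V] [InnerProductSpace ℝ V]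
    [FiniteDimensional ℝ V]
    (A : V →L[ℝ] V) (hA : ∀ x y : V, ⟪A x, y⟫ = ⟪x, A y⟫)
    (δ : ℝ) (hδ : 0 < δ) (hcoer : ∀ v : V, δ * ‖v‖ ^ 2 ≤ ⟪A v, v⟫)
    (τ : ℝ) (hτ : 0 < τ)
    (z : ℕ → V)
    (hscheme : ∀ n : ℕ, τ⁻¹ • (z (n + 1) - z n) + A (z (n + 1)) = 0) :
    ∀ n : ℕ, ‖z n‖ ≤ ((1 + τ * δ) ^ n)⁻¹ * ‖z 0‖ := by
  have hpos : 0 < 1 + τ * δ := by nlinarith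
  have hstep : ∀ n : ℕ, (1 + τ * δ) * ‖z (n + 1)‖ ≤ ‖z n‖ := by
    intro n
    have h := hscheme n
    have hz : z n = z (n + 1) + τ • A (z (n + 1)) := by
      have := congrArg (fun v => τ • v) h
      simp only [smul_add, smul_smul, mul_inv_cancel₀ hτ.ne', one_smul, smul_zero] at this
      have : z (n + 1) - z n + τ • A (z (n + 1)) = 0 := this
      rw [sub_add_eq_add_sub, sub_eq_zero] at this
      exact this.symm
    have h1 : ⟪z n, z (n + 1)⟫ = ‖z (n + 1)‖ ^ 2 + τ * ⟪A (z (n + 1)), z (n + 1)⟫ := by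
      rw [hz, inner_add_left, real_inner_smul_left, real_inner_self_eq_norm_sq]
    have h2 : (1 + τ * δ) * ‖z (n + 1)‖ ^ 2 ≤ ⟪z n, z (n + 1)⟫ := by
      have := hcoer (z (n + 1))
      nlinarith
    have h3 : ⟪z n, z (n + 1)⟫ ≤ ‖z n‖ * ‖z (n + 1)‖ := real_inner_le_norm _ _
    rcases eq_or_lt_of_le (norm_nonneg (z (n + 1))) with hz0 | hz0
    · rw [← hz0]; simp [norm_nonneg]
    · nlinarith
  intro n
  induction n with
  | zero => simp
  | succ n ih =>
    have h := hstep n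
    have : ‖z (n + 1)‖ ≤ (1 + τ * δ)⁻¹ * ‖z n‖ := by
      rw [inv_mul_eq_div, le_div_iff₀ hpos]
      linarith [h]
    calc ‖z (n + 1)‖ ≤ (1 + τ * δ)⁻¹ * ‖z n‖ := this
      _ ≤ (1 + τ * δ)⁻¹ * (((1 + τ * δ) ^ n)⁻¹ * ‖z 0‖) := by
          exact mul_le_mul_of_nonneg_left ih (inv_nonneg.mpr hpos.le)
      _ = ((1 + τ * δ) ^ (n + 1))⁻¹ * ‖z 0‖ := by
          rw [pow_succ, mul_inv]; ring
end

section
/- (Theorem 1.) Let τ > 0, N ≥ 1 a natural number, χ ∈ V and φ̂ ∈ V. Let v : ℕ → V satisfy (v_{n+1} − v_n)/τ + A v_{n+1} = 0 for 0 ≤ n ≤ N−1 and v_N − v_0 = χ, and set φ = φ̂ + v_0. Let (v^k)_{k∈ℕ} be a sequence of functions ℕ → V such that for every k: (v^k_{n+1} − v^k_n)/τ + A v^k_{n+1} = 0 for 0 ≤ n ≤ N−1, and v^{k+1}_0 = v^k_N − χ; set φ^k = φ̂ + v^k_0. Then for every k ∈ ℕ, ‖v^{k+1}_0 − v_0‖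 ≤ (1 + τ δ)^{−N} · ‖v^k_0 − v_0‖ and ‖φ^{k+1} − φ‖ ≤ (1 + τ δ)^{−N} · ‖v^k_0 − v_0‖; in particular the iterative process converges linearly with rate (1 + τ δ)^{−N} < 1. -/
open RealInnerProductSpace

/-- Theorem 1: the iterative process for the fully implicit scheme with nonlocal
condition `v_N - v_0 = χ` converges linearly with rate `(1 + τ δ)^{-N} < 1`, both
for the initial value iterates and for the recovered right-hand sides
`φ^k = φ̂ + v^k_0`. -/
theorem stmt_5 {V : Type*} [NormedAddCommGroup V] [InnerProductSpace ℝ V]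
    [FiniteDimensional ℝ V]
    (A : V →L[ℝ] V) (hA : ∀ x y : V, ⟪A x, y⟫ = ⟪x, A y⟫)
    (δ : ℝ) (hδ : 0 < δ) (hcoer : ∀ v : V, δ * ‖v‖ ^ 2 ≤ ⟪A v, v⟫)
    (τ : ℝ) (hτ : 0 < τ) (N : ℕ) (hN : 1 ≤ N)
    (χ φhat : V)
    (v : ℕ → V)
    (hvscheme : ∀ n < N, τ⁻¹ • (v (n + 1) - v n) + A (v (n + 1)) = 0)
    (hvnl : v N - v 0 = χ)
    (φ : V) (hφ : φ = φhat + v 0)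
    (vs : ℕ → ℕ → V)
    (hsscheme : ∀ k : ℕ, ∀ n < N, τ⁻¹ • (vs k (n + 1) - vs k n) + A (vs k (n + 1)) = 0)
    (hiter : ∀ k : ℕ, vs (k + 1) 0 = vs k N - χ)
    (φs : ℕ → V) (hφs : ∀ k : ℕ, φs k = φhat + vs k 0) :
    ((1 + τ * δ) ^ N)⁻¹ < 1 ∧
      (∀ k : ℕ, ‖vs (k + 1) 0 - v 0‖ ≤ ((1 + τ * δ) ^ N)⁻¹ * ‖vs k 0 - v 0‖) ∧
      (∀ k : ℕ, ‖φs (k + 1) - φ‖ ≤ ((1 + τ * δ) ^ N)⁻¹ * ‖vs k 0 - v 0‖) := by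
  have hbase : 1 < 1 + τ * δ := by nlinarith
  have hbpos : (0:ℝ) < 1 + τ * δ := by linarith
  have hpowpos : (0:ℝ) < (1 + τ * δ) ^ N := pow_pos hbpos N
  have hlt : ((1 + τ * δ) ^ N)⁻¹ < 1 := by
    rw [inv_lt_one₀ hpowpos]
    exact one_lt_pow₀ hbase (by omega)
  -- one-step contraction
  have step : ∀ u w : V, τ⁻¹ • (w - u) + A w = 0 → (1 + τ * δ) * ‖w‖ ≤ ‖u‖ := by
    intro u w h
    have hu : u = w + τ • A w := by
      have h1 : τ⁻¹ • (w - u) = -(A w) := eq_neg_of_add_eq_zero_left h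
      have h2 : w - u = -(τ • A w) := by
        calc w - u = τ • (τ⁻¹ • (w - u)) := by
              rw [smul_smul, mul_inv_cancel₀ hτ.ne', one_smul]
          _ = τ • (-(A w)) := by rw [h1]
          _ = -(τ • A w) := smul_neg τ (A w)
      have h3 : u = w - (-(τ • A w)) := by rw [← h2]; abel
      rw [sub_neg_eq_add] at h3
      exact h3
    have hinner : ⟪u, w⟫ = ⟪w, w⟫ + τ * ⟪A w, w⟫ := by
      rw [hu, inner_add_left, real_inner_smul_left]
    have hlow : (1 + τ * δ) * ‖w‖ ^ 2 ≤ ⟪u, w⟫ := by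
      have h3 := hcoer w
      have h4 : ⟪w, w⟫ = ‖w‖ ^ 2 := real_inner_self_eq_norm_sq w
      nlinarith
    have hcs : ⟪u, w⟫ ≤ ‖u‖ * ‖w‖ := real_inner_le_norm u w
    rcases eq_or_lt_of_le (norm_nonneg w) with hw | hw
    · rw [← hw, mul_zero]; exact norm_nonneg u
    · have := hlow.trans hcs
      nlinarith
  constructor
  · exact hlt
  have key : ∀ k : ℕ, ‖vs (k + 1) 0 - v 0‖ ≤ ((1 + τ * δ) ^ N)⁻¹ * ‖vs k 0 - v 0‖ := by
    intro k
    set e : ℕ → V := fun n => vs k n - v n with he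
    have hstep : ∀ n < N, (1 + τ * δ) * ‖e (n + 1)‖ ≤ ‖e n‖ := by
      intro n hn
      apply step
      have h1 := hsscheme k n hn
      have h2 := hvscheme n hn
      have : (τ⁻¹ • (vs k (n+1) - vs k n) + A (vs k (n+1))) -
          (τ⁻¹ • (v (n+1) - v n) + A (v (n+1))) = 0 := by rw [h1, h2]; simp
      calc τ⁻¹ • (e (n+1) - e n) + A (e (n+1))
          = (τ⁻¹ • (vs k (n+1) - vs k n) + A (vs k (n+1))) -
            (τ⁻¹ • (v (n+1) - v n) + A (v (n+1))) := by
            simp only [he, map_sub, smul_sub]; abel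
        _ = 0 := this
    have hind : ∀ m, m ≤ N → (1 + τ * δ) ^ m * ‖e m‖ ≤ ‖e 0‖ := by
      intro m
      induction m with
      | zero => simp
      | succ m ih =>
        intro hm
        have hmN : m ≤ N := by omega
        have h1 := hstep m (by omega)
        have h2 := ih hmN
        calc (1 + τ * δ) ^ (m + 1) * ‖e (m + 1)‖
            = (1 + τ * δ) ^ m * ((1 + τ * δ) * ‖e (m + 1)‖) := by ring
          _ ≤ (1 + τ * δ) ^ m * ‖e m‖ := by
              apply mul_le_mul_of_nonneg_left h1 (le_of_lt (pow_pos hbpos m))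
          _ ≤ ‖e 0‖ := h2
    have hfin := hind N le_rfl
    have heq : vs (k + 1) 0 - v 0 = e N := by
      rw [hiter k, ← hvnl, he]
      abel
    rw [heq, inv_mul_eq_div, le_div_iff₀ hpowpos]
    calc ‖e N‖ * (1 + τ * δ) ^ N = (1 + τ * δ) ^ N * ‖e N‖ := by ring
      _ ≤ ‖e 0‖ := hfin
  refine ⟨key, fun k => ?_⟩
  have : φs (k + 1) - φ = vs (k + 1) 0 - v 0 := by
    rw [hφs, hφ]; abel
  rw [this]; exact key k
end

section
/- (Theorem 2.) Let τ > 0, N ≥ 2 a natural number, φ, φ̂, ψ ∈ V. Let w : ℕ → V satisfy w_0 = φ̂, (w_{n+1} − w_n)/τ + A w_{n+1} = φ for 0 ≤ n ≤ N−1, and w_N = ψ. Let (φ^k)_{k∈ℕ} in V and functions w^k : ℕ → V be such that for every k: w^k_0 = φ̂, (w^k_{n+1} − w^k_n)/τ + A w^k_{n+1} = φ^k for 0 ≤ n ≤ N−1, and φ^{k+1} = (w^k_N − w^k_{N−1})/τ + A ψ. Then for every k ∈ ℕ, ‖φ^{k+1} − φ‖ ≤ (1 + τ δ)^{−N} ·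 ‖φ^k − φ‖; in particular the iterative process converges linearly with rate (1 + τ δ)^{−N} < 1. -/
open RealInnerProductSpace

/-- Theorem 2: the discrete iterative identification of the constant right-hand side
`φ` of the fully implicit scheme from final overdetermination `w_N = ψ` converges
linearly with rate `(1 + τ δ)^{-N} < 1`. -/
theorem stmt_7 {V : Type*} [NormedAddCommGroup V] [InnerProductSpace ℝ V]
    [FiniteDimensional ℝ V]
    (A : V →L[ℝ] V) (hA : ∀ x y : V, ⟪A x, y⟫ = ⟪x, A y⟫)
    (δ : ℝ) (hδ : 0 < δ) (hcoer : ∀ v : V, δ * ‖v‖ ^ 2 ≤ ⟪A v, v⟫)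
    (τ : ℝ) (hτ : 0 < τ) (N : ℕ) (hN : 2 ≤ N)
    (φ φhat ψ : V)
    (w : ℕ → V) (hw0 : w 0 = φhat)
    (hwscheme : ∀ n < N, τ⁻¹ • (w (n + 1) - w n) + A (w (n + 1)) = φ)
    (hwN : w N = ψ)
    (φs : ℕ → V) (ws : ℕ → ℕ → V)
    (hs0 : ∀ k : ℕ, ws k 0 = φhat)
    (hsscheme : ∀ k : ℕ, ∀ n < N, τ⁻¹ • (ws k (n + 1) - ws k n) + A (ws k (n + 1)) = φs k)
    (hiter : ∀ k : ℕ, φs (k + 1) = τ⁻¹ • (ws k N - ws k (N - 1)) + A ψ) :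
    ((1 + τ * δ) ^ N)⁻¹ < 1 ∧
      ∀ k : ℕ, ‖φs (k + 1) - φ‖ ≤ ((1 + τ * δ) ^ N)⁻¹ * ‖φs k - φ‖ := by
  have hone : (1:ℝ) < 1 + τ * δ := by nlinarith
  have hpos : (0:ℝ) < 1 + τ * δ := by linarith
  have hlt : ((1 + τ * δ) ^ N)⁻¹ < 1 := by
    rw [inv_lt_one_iff₀]
    right
    exact one_lt_pow₀ hone (by omega)
  refine ⟨hlt, fun k => ?_⟩
  -- coercivity-based norm bound
  have key : ∀ v : V, (1 + τ * δ) * ‖v‖ ≤ ‖v + τ • A v‖ := by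
    intro v
    rcases eq_or_ne v 0 with rfl | hv
    · simp
    · have hnv : (0:ℝ) < ‖v‖ := norm_pos_iff.mpr hv
      have h1 : (1 + τ * δ) * ‖v‖ ^ 2 ≤ ⟪v + τ • A v, v⟫ := by
        rw [inner_add_left, real_inner_smul_left, real_inner_self_eq_norm_sq]
        nlinarith [hcoer v]
      have h2 : ⟪v + τ • A v, v⟫ ≤ ‖v + τ • A v‖ * ‖v‖ := real_inner_le_norm _ _
      have := h1.trans h2
      nlinarith
  obtain ⟨g, hg⟩ : ∃ g : V, g = φs k - φ := ⟨_, rfl⟩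
  obtain ⟨e, he⟩ : ∃ e : ℕ → V, ∀ n, e n = ws k n - w n := ⟨_, fun _ => rfl⟩
  obtain ⟨u, hu⟩ : ∃ u : ℕ → V, ∀ n, u n = g - A (e n) := ⟨_, fun _ => rfl⟩
  -- error scheme
  have herr : ∀ n < N, e (n + 1) + τ • A (e (n + 1)) = e n + τ • g := by
    intro n hn
    have h1' : ws k (n+1) - ws k n + τ • A (ws k (n+1)) = τ • φs k := by
      have h := congrArg (τ • ·) (hsscheme k n hn)
      simpa [smul_add, smul_smul, mul_inv_cancel₀ hτ.ne'] using h
    have h2' : w (n+1) - w n + τ • A (w (n+1)) = τ • φ := by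
      have h := congrArg (τ • ·) (hwscheme n hn)
      simpa [smul_add, smul_smul, mul_inv_cancel₀ hτ.ne'] using h
    rw [he (n+1), he n, hg, map_sub]
    linear_combination (norm := module) h1' - h2'
  -- recursion for u
  have hrec : ∀ n < N, u n = u (n + 1) + τ • A (u (n + 1)) := by
    intro n hn
    have hA1 : A (e (n+1)) + τ • A (A (e (n+1))) = A (e n) + τ • A g := by
      have h := congrArg A (herr n hn)
      simpa [map_add, map_smul] using h
    rw [hu n, hu (n+1), map_sub]
    linear_combination (norm := module) hA1
  -- norm decay by induction
  have hdecay : ∀ n ≤ N, ‖u n‖ ≤ ((1 + τ * δ) ^ n)⁻¹ * ‖u 0‖ := by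
    intro n hn
    induction n with
    | zero => simp
    | succ m ih =>
      have hm : m ≤ N := by omega
      have hmN : m < N := by omega
      have h1 : (1 + τ * δ) * ‖u (m+1)‖ ≤ ‖u m‖ := by
        calc (1 + τ * δ) * ‖u (m+1)‖ ≤ ‖u (m+1) + τ • A (u (m+1))‖ := key _
          _ = ‖u m‖ := by rw [← hrec m hmN]
      have h2 := ih hm
      have h1' : ‖u (m+1)‖ ≤ (1 + τ * δ)⁻¹ * ‖u m‖ := by
        rw [← div_eq_inv_mul, le_div_iff₀ hpos]
        nlinarith
      rw [pow_succ, mul_inv]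
      calc ‖u (m+1)‖ ≤ (1 + τ * δ)⁻¹ * ‖u m‖ := h1'
        _ ≤ (1 + τ * δ)⁻¹ * (((1 + τ * δ) ^ m)⁻¹ * ‖u 0‖) := by
            apply mul_le_mul_of_nonneg_left h2 (by positivity)
        _ = ((1 + τ * δ) ^ m)⁻¹ * (1 + τ * δ)⁻¹ * ‖u 0‖ := by ring
  -- u 0 = g
  have hu0 : u 0 = g := by
    rw [hu 0, he 0, hs0 k, hw0]
    simp
  -- identify φs (k+1) - φ = u N
  have hN1 : N - 1 < N := by omega
  have hN1' : N - 1 + 1 = N := by omega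
  have hφ : φ = τ⁻¹ • (w N - w (N-1)) + A ψ := by
    have h := hwscheme (N-1) hN1
    rw [hN1'] at h
    rw [← h, hwN]
  have hidN : φs (k+1) - φ = τ⁻¹ • (e N - e (N-1)) := by
    rw [he N, he (N-1), hiter k, hφ]
    module
  have herrN : τ⁻¹ • (e N - e (N-1)) + A (e N) = g := by
    have h1 := hsscheme k (N-1) hN1
    have h2 := hwscheme (N-1) hN1
    rw [hN1'] at h1 h2
    rw [he N, he (N-1), hg, map_sub]
    linear_combination (norm := module) h1 - h2
  have huN : u N = τ⁻¹ • (e N - e (N-1)) := by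
    rw [hu N, ← herrN]
    abel
  have hfinal : φs (k+1) - φ = u N := hidN.trans huN.symm
  rw [hfinal]
  calc ‖u N‖ ≤ ((1 + τ * δ) ^ N)⁻¹ * ‖u 0‖ := hdecay N le_rfl
    _ = ((1 + τ * δ) ^ N)⁻¹ * ‖φs k - φ‖ := by rw [hu0, hg]
end

section
/- Under the hypotheses of Theorem 2 (exact discrete solution w : ℕ → V with w_0 = φ̂, (w_{n+1} − w_n)/τ + A w_{n+1} = φ for 0 ≤ n ≤ N−1, w_N = ψ; iterates w^k with w^k_0 = φ̂, (w^k_{n+1} − w^k_n)/τ + A w^k_{n+1} = φ^k for 0 ≤ n ≤ N−1 and φ^{k+1} = (w^k_N − w^k_{N−1})/τ + A ψ), it holds for every k ∈ ℕ that ‖φ^k − φ‖ ≤ (1 + τ δ)^{−N k} · ‖φ^0 − φ‖. -/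
open RealInnerProductSpace

/-- Geometric convergence of the discrete right-hand side identification:
`‖φ^k - φ‖ ≤ (1 + τ δ)^{-N k} ‖φ^0 - φ‖`. -/
theorem stmt_8 {V : Type*} [NormedAddCommGroup V] [InnerProductSpace ℝ V]
    [FiniteDimensional ℝ V]
    (A : V →L[ℝ] V) (hA : ∀ x y : V, ⟪A x, y⟫ = ⟪x, A y⟫)
    (δ : ℝ) (hδ : 0 < δ) (hcoer : ∀ v : V, δ * ‖v‖ ^ 2 ≤ ⟪A v, v⟫)
    (τ : ℝ) (hτ : 0 < τ) (N : ℕ) (hN : 2 ≤ N)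
    (φ φhat ψ : V)
    (w : ℕ → V) (hw0 : w 0 = φhat)
    (hwscheme : ∀ n < N, τ⁻¹ • (w (n + 1) - w n) + A (w (n + 1)) = φ)
    (hwN : w N = ψ)
    (φs : ℕ → V) (ws : ℕ → ℕ → V)
    (hs0 : ∀ k : ℕ, ws k 0 = φhat)
    (hsscheme : ∀ k : ℕ, ∀ n < N, τ⁻¹ • (ws k (n + 1) - ws k n) + A (ws k (n + 1)) = φs k)
    (hiter : ∀ k : ℕ, φs (k + 1) = τ⁻¹ • (ws k N - ws k (N - 1)) + A ψ) :
    ∀ k : ℕ, ‖φs k - φ‖ ≤ ((1 + τ * δ) ^ (N * k))⁻¹ * ‖φs 0 - φ‖ := by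
  have hτ0 : τ ≠ 0 := ne_of_gt hτ
  have hpos : (0:ℝ) < 1 + τ * δ := by positivity
  have hstep : ∀ v : V, (1 + τ * δ) * ‖v‖ ≤ ‖v + τ • A v‖ := by
    intro v
    rcases eq_or_ne v 0 with rfl | hv
    · simp
    have h1 : (1 + τ * δ) * ‖v‖ ^ 2 ≤ ⟪v + τ • A v, v⟫ := by
      rw [inner_add_left, real_inner_smul_left, real_inner_self_eq_norm_sq]
      nlinarith [hcoer v]
    have h2 : ⟪v + τ • A v, v⟫ ≤ ‖v + τ • A v‖ * ‖v‖ := real_inner_le_norm _ _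
    have hv' : 0 < ‖v‖ := norm_pos_iff.mpr hv
    nlinarith
  have key : ∀ k : ℕ, (1 + τ * δ) ^ N * ‖φs (k+1) - φ‖ ≤ ‖φs k - φ‖ := by
    intro k
    set e := φs k - φ with he
    set z : ℕ → V := fun n => ws k n - w n with hz
    set u : ℕ → V := fun n => e - A (z n) with hu
    have hz0 : z 0 = 0 := by simp [hz, hs0, hw0]
    have hzrec : ∀ n < N, z (n+1) - z n = τ • u (n+1) := by
      intro n hn
      have h1 := hsscheme k n hn
      have h2 := hwscheme n hn
      have h3 : τ⁻¹ • (z (n+1) - z n) + A (z (n+1)) = e := by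
        simp only [hz, he, map_sub]
        rw [← h1, ← h2]
        simp only [smul_sub]
        abel
      have h4 : τ⁻¹ • (z (n+1) - z n) = u (n+1) := by
        simp only [hu]
        rw [← h3]; abel
      calc z (n+1) - z n = τ • τ⁻¹ • (z (n+1) - z n) := by
            rw [smul_smul, mul_inv_cancel₀ hτ0, one_smul]
        _ = τ • u (n+1) := by rw [h4]
    have hurec : ∀ n < N, u n = u (n+1) + τ • A (u (n+1)) := by
      intro n hn
      have h5 : A (z (n+1)) - A (z n) = τ • A (u (n+1)) := by
        rw [← map_sub, hzrec n hn, map_smul]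
      simp only [hu]
      rw [← h5]; abel
    have hu0 : u 0 = e := by simp [hu, hz0]
    have hN1 : N - 1 + 1 = N := by omega
    have hN1lt : N - 1 < N := by omega
    have huN : u N = φs (k+1) - φ := by
      have hφ : τ⁻¹ • (w N - w (N-1)) + A ψ = φ := by
        rw [← hwN]
        have := hwscheme (N-1) hN1lt
        rwa [hN1] at this
      have h6 : φs (k+1) - φ = τ⁻¹ • (z N - z (N-1)) := by
        rw [hiter k, ← hφ]
        simp only [hz, smul_sub]
        abel
      have h7 : z N - z (N-1) = τ • u N := by
        have := hzrec (N-1) hN1lt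
        rwa [hN1] at this
      rw [h6, h7, smul_smul, inv_mul_cancel₀ hτ0, one_smul]
    have hind : ∀ n, n ≤ N → (1 + τ * δ) ^ n * ‖u n‖ ≤ ‖u 0‖ := by
      intro n
      induction n with
      | zero => simp
      | succ m ih =>
        intro h
        have hm : m < N := h
        have hb : (1 + τ * δ) * ‖u (m+1)‖ ≤ ‖u m‖ := by
          have := hstep (u (m+1))
          rwa [← hurec m hm] at this
        calc (1 + τ * δ) ^ (m+1) * ‖u (m+1)‖
            = (1 + τ * δ) ^ m * ((1 + τ * δ) * ‖u (m+1)‖) := by ring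
          _ ≤ (1 + τ * δ) ^ m * ‖u m‖ := by
              apply mul_le_mul_of_nonneg_left hb (le_of_lt (pow_pos hpos m))
          _ ≤ ‖u 0‖ := ih (le_of_lt hm)
    have := hind N le_rfl
    rwa [huN, hu0] at this
  intro k
  induction k with
  | zero => simp
  | succ k ih =>
    have h1 := key k
    have hPN : (0:ℝ) < (1 + τ * δ) ^ N := pow_pos hpos N
    have h2 : ‖φs (k+1) - φ‖ ≤ ((1 + τ * δ) ^ N)⁻¹ * ‖φs k - φ‖ := by
      rw [inv_mul_eq_div, le_div_iff₀ hPN]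
      linarith [h1]
    calc ‖φs (k+1) - φ‖ ≤ ((1 + τ * δ) ^ N)⁻¹ * ‖φs k - φ‖ := h2
      _ ≤ ((1 + τ * δ) ^ N)⁻¹ * (((1 + τ * δ) ^ (N * k))⁻¹ * ‖φs 0 - φ‖) := by
          apply mul_le_mul_of_nonneg_left ih (by positivity)
      _ = ((1 + τ * δ) ^ (N * (k+1)))⁻¹ * ‖φs 0 - φ‖ := by
          rw [← mul_assoc, ← mul_inv, ← pow_add]
          ring_nf
end

section
/- Let ω : ℝ → ℝ be continuous and nonnegative on [0,T], and let v : ℝ → V be differentiable on [0,T] with v'(t) + A v(t) = 0 for t ∈ [0,T]. Then ‖∫₀ᵀ ω(t) v(t) dt‖ ≤ (∫₀ᵀ ω(t) exp(−δ t) dt) · ‖v(0)‖. -/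
open RealInnerProductSpace

/-- Weighted-integral estimate for the homogeneous equation `v' + A v = 0`:
`‖∫₀ᵀ ω(t) v(t) dt‖ ≤ (∫₀ᵀ ω(t) exp(-δ t) dt) ‖v(0)‖`. -/
theorem stmt_9 {V : Type*} [NormedAddCommGroup V] [InnerProductSpace ℝ V]
    [FiniteDimensional ℝ V]
    (A : V →L[ℝ] V) (hA : ∀ x y : V, ⟪A x, y⟫ = ⟪x, A y⟫)
    (δ : ℝ) (hδ : 0 < δ) (hcoer : ∀ v : V, δ * ‖v‖ ^ 2 ≤ ⟪A v, v⟫)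
    (T : ℝ) (hT : 0 < T)
    (ω : ℝ → ℝ)
    (hωc : ContinuousOn ω (Set.Icc (0 : ℝ) T))
    (hωpos : ∀ t ∈ Set.Icc (0 : ℝ) T, 0 ≤ ω t)
    (v : ℝ → V)
    (hvdiff : ∀ t ∈ Set.Icc (0 : ℝ) T, DifferentiableAt ℝ v t)
    (hveq : ∀ t ∈ Set.Icc (0 : ℝ) T, deriv v t + A (v t) = 0) :
    ‖∫ t in (0 : ℝ)..T, ω t • v t‖ ≤
      (∫ t in (0 : ℝ)..T, ω t * Real.exp (-δ * t)) * ‖v 0‖ := by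
  set g : ℝ → ℝ := fun t => Real.exp (2 * δ * t) * ⟪v t, v t⟫ with hgdef
  have hgderiv : ∀ t ∈ Set.Icc (0 : ℝ) T,
      HasDerivAt g (Real.exp (2 * δ * t) * (2 * δ * ⟪v t, v t⟫ - 2 * ⟪A (v t), v t⟫)) t := by
    intro t ht
    have hv := (hvdiff t ht).hasDerivAt
    have hinner : HasDerivAt (fun t => ⟪v t, v t⟫)
        (⟪v t, deriv v t⟫ + ⟪deriv v t, v t⟫) t := by
      simpa [hv.deriv] using hv.inner ℝ hv
    have hexp : HasDerivAt (fun t => Real.exp (2 * δ * t)) (2 * δ * Real.exp (2 * δ * t)) t := by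
      simpa [mul_comm] using ((hasDerivAt_id t).const_mul (2 * δ)).exp
    have hd : deriv v t = -(A (v t)) := eq_neg_of_add_eq_zero_left (hveq t ht)
    have hval : ⟪v t, deriv v t⟫ + ⟪deriv v t, v t⟫ = -(2 * ⟪A (v t), v t⟫) := by
      rw [hd, inner_neg_left, inner_neg_right, real_inner_comm]
      ring
    have := hexp.mul hinner
    rw [hval] at this
    exact this.congr_deriv (by ring)
  have hdecay : ∀ t ∈ Set.Icc (0 : ℝ) T, ‖v t‖ ≤ Real.exp (-δ * t) * ‖v 0‖ := by
    have hanti : AntitoneOn g (Set.Icc (0 : ℝ) T) := by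
      apply antitoneOn_of_deriv_nonpos (convex_Icc 0 T)
      · exact fun t ht => ((hgderiv t ht).continuousAt).continuousWithinAt
      · intro t ht
        rw [interior_Icc] at ht
        exact ((hgderiv t (Set.mem_Icc_of_Ioo ht)).differentiableAt.differentiableWithinAt)
      · intro t ht
        rw [interior_Icc] at ht
        rw [(hgderiv t (Set.mem_Icc_of_Ioo ht)).deriv]
        have h1 : 2 * δ * ⟪v t, v t⟫ - 2 * ⟪A (v t), v t⟫ ≤ 0 := by
          have := hcoer (v t)
          rw [real_inner_self_eq_norm_sq]
          nlinarith
        have h2 : 0 ≤ Real.exp (2 * δ * t) := (Real.exp_pos _).le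
        exact mul_nonpos_of_nonneg_of_nonpos h2 h1
    intro t ht
    have h0 : (0:ℝ) ∈ Set.Icc (0:ℝ) T := Set.mem_Icc.2 ⟨le_refl 0, hT.le⟩
    have hle : g t ≤ g 0 := hanti h0 ht ht.1
    have hg0 : g 0 = ‖v 0‖ ^ 2 := by
      simp [hgdef, real_inner_self_eq_norm_sq]
    have hgt : g t = Real.exp (2 * δ * t) * ‖v t‖ ^ 2 := by
      simp [hgdef, real_inner_self_eq_norm_sq]
    have h2 : ‖v t‖ ^ 2 ≤ (Real.exp (-δ * t) * ‖v 0‖) ^ 2 := by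
      have hexp2 : (Real.exp (-δ * t)) ^ 2 = Real.exp (-(2 * δ * t)) := by
        rw [← Real.exp_nat_mul]; ring_nf
      have hpos : 0 < Real.exp (2 * δ * t) := Real.exp_pos _
      rw [mul_pow, hexp2, Real.exp_neg]
      rw [hgt, hg0] at hle
      rw [inv_mul_eq_div, le_div_iff₀ hpos]
      linarith [hle]
    have := Real.sqrt_le_sqrt h2
    rwa [Real.sqrt_sq (norm_nonneg _), Real.sqrt_sq (by positivity)] at this
  have hbound : ∀ t ∈ Set.uIoc (0:ℝ) T, ‖ω t • v t‖ ≤ ω t * Real.exp (-δ * t) * ‖v 0‖ := by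
    intro t ht
    rw [Set.uIoc_of_le hT.le] at ht
    have ht' : t ∈ Set.Icc (0:ℝ) T := ⟨ht.1.le, ht.2⟩
    rw [norm_smul, Real.norm_eq_abs, abs_of_nonneg (hωpos t ht')]
    calc ω t * ‖v t‖ ≤ ω t * (Real.exp (-δ * t) * ‖v 0‖) :=
          mul_le_mul_of_nonneg_left (hdecay t ht') (hωpos t ht')
      _ = ω t * Real.exp (-δ * t) * ‖v 0‖ := by ring
  have hint : IntervalIntegrable (fun t => ω t * Real.exp (-δ * t) * ‖v 0‖)
      MeasureTheory.volume 0 T := by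
    apply ContinuousOn.intervalIntegrable
    rw [Set.uIcc_of_le hT.le]
    exact ((hωc.mul ((Real.continuous_exp.comp (continuous_const.mul continuous_id)).continuousOn)).mul
      continuousOn_const)
  have := intervalIntegral.norm_integral_le_abs_of_norm_le
    ((MeasureTheory.ae_restrict_iff' measurableSet_uIoc).2
      (Filter.Eventually.of_forall hbound)) hint
  have hnn : 0 ≤ ∫ t in (0 : ℝ)..T, ω t * Real.exp (-δ * t) * ‖v 0‖ := by
    apply intervalIntegral.integral_nonneg hT.le
    intro u hu
    have := hωpos u hu
    positivity
  calc ‖∫ t in (0 : ℝ)..T, ω t • v t‖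
      ≤ ∫ t in (0 : ℝ)..T, ω t * Real.exp (-δ * t) * ‖v 0‖ := by
        rwa [abs_of_nonneg hnn] at this
    _ = (∫ t in (0 : ℝ)..T, ω t * Real.exp (-δ * t)) * ‖v 0‖ :=
        intervalIntegral.integral_mul_const _ _
end

section
/- (Theorem 3.) Let ω : ℝ → ℝ be continuous and nonnegative on [0,T] with ∫₀ᵀ ω(t) dt = 1, and set ϱ = ∫₀ᵀ ω(t) exp(−δ t) dt. Let φ, φ̂, ψ ∈ V and let w : ℝ → V be continuously differentiable on [0,T] with w'(t) + A w(t) = φ for t ∈ [0,T], w(0) = φ̂ and ∫₀ᵀ ω(t) w(t) dt = ψ. Let (φ^k)_{k∈ℕ} in V and functions w^k : ℝ → V be such that for every k: w^k is continuously differentiable on [0,T], (w^k)'(t) + A w^k(t) = φ^k for t ∈ [0,T], w^k(0) = φ̂, and φ^{k+1} = ∫₀ᵀ ω(t) (w^k)'(t) dt + A ψ. Then for every k ∈ ℕ, ‖φ^{k+1} − φ‖ ≤ ϱ · ‖φ^k − φ‖. -/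
open RealInnerProductSpace

/-- Theorem 3: the iterative identification of the constant right-hand side `φ` of
`w' + A w = φ` from the integral overdetermination `∫₀ᵀ ω(t) w(t) dt = ψ` contracts
with factor `ϱ = ∫₀ᵀ ω(t) exp(-δ t) dt`. -/
theorem stmt_10 {V : Type*} [NormedAddCommGroup V] [InnerProductSpace ℝ V]
    [FiniteDimensional ℝ V]
    (A : V →L[ℝ] V) (hA : ∀ x y : V, ⟪A x, y⟫ = ⟪x, A y⟫)
    (δ : ℝ) (hδ : 0 < δ) (hcoer : ∀ v : V, δ * ‖v‖ ^ 2 ≤ ⟪A v, v⟫)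
    (T : ℝ) (hT : 0 < T)
    (ω : ℝ → ℝ)
    (hωc : ContinuousOn ω (Set.Icc (0 : ℝ) T))
    (hωpos : ∀ t ∈ Set.Icc (0 : ℝ) T, 0 ≤ ω t)
    (hωint : (∫ t in (0 : ℝ)..T, ω t) = 1)
    (ϱ : ℝ) (hϱ : ϱ = ∫ t in (0 : ℝ)..T, ω t * Real.exp (-δ * t))
    (φ φhat ψ : V) (w : ℝ → V)
    (hwdiff : ∀ t ∈ Set.Icc (0 : ℝ) T, DifferentiableAt ℝ w t)
    (hwc : ContinuousOn (deriv w) (Set.Icc (0 : ℝ) T))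
    (hweq : ∀ t ∈ Set.Icc (0 : ℝ) T, deriv w t + A (w t) = φ)
    (hw0 : w 0 = φhat)
    (hwover : (∫ t in (0 : ℝ)..T, ω t • w t) = ψ)
    (φs : ℕ → V) (ws : ℕ → ℝ → V)
    (hsdiff : ∀ k : ℕ, ∀ t ∈ Set.Icc (0 : ℝ) T, DifferentiableAt ℝ (ws k) t)
    (hsc : ∀ k : ℕ, ContinuousOn (deriv (ws k)) (Set.Icc (0 : ℝ) T))
    (hseq : ∀ k : ℕ, ∀ t ∈ Set.Icc (0 : ℝ) T, deriv (ws k) t + A (ws k t) = φs k)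
    (hs0 : ∀ k : ℕ, ws k 0 = φhat)
    (hiter : ∀ k : ℕ, φs (k + 1) = (∫ t in (0 : ℝ)..T, ω t • deriv (ws k) t) + A ψ) :
    ∀ k : ℕ, ‖φs (k + 1) - φ‖ ≤ ϱ * ‖φs k - φ‖ := by
  intro k
  set I : Set ℝ := Set.Icc (0 : ℝ) T with hI
  have hTle : (0 : ℝ) ≤ T := hT.le
  have huIcc : Set.uIcc (0 : ℝ) T = I := Set.uIcc_of_le hTle
  set e : V := φs k - φ with he
  set u : ℝ → V := fun t => ws k t - w t with hu
  set f : ℝ → V := fun t => e - A (u t) with hf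
  -- derivative of u
  have hu_deriv : ∀ t ∈ I, HasDerivAt u (f t) t := by
    intro t ht
    have h1 := ((hsdiff k t ht).hasDerivAt.sub (hwdiff t ht).hasDerivAt)
    have h2 : deriv (ws k) t - deriv w t = f t := by
      have e1 : deriv (ws k) t = φs k - A (ws k t) := by
        have := hseq k t ht; linear_combination (norm := abel) this
      have e2 : deriv w t = φ - A (w t) := by
        have := hweq t ht; linear_combination (norm := abel) this
      rw [e1, e2]
      simp only [hf, hu, he, map_sub]
      abel
    rw [h2] at h1
    exact h1
  -- u is continuous on I
  have hu_cont : ContinuousOn u I := fun t ht => ((hu_deriv t ht).continuousAt).continuousWithinAt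
  have hf_cont : ContinuousOn f I :=
    continuousOn_const.sub (A.continuous.comp_continuousOn hu_cont)
  -- derivative of f
  have hf_deriv : ∀ t ∈ I, HasDerivAt f (-(A (f t))) t := by
    intro t ht
    have hAu : HasDerivAt (fun s => A (u s)) (A (f t)) t :=
      A.hasFDerivAt.comp_hasDerivAt t (hu_deriv t ht)
    exact hAu.const_sub e
  -- the function g and its derivative
  set g : ℝ → V := fun t => Real.exp (δ * t) • f t with hg
  have hg_deriv : ∀ t ∈ I, HasDerivAt g (δ • g t - A (g t)) t := by
    intro t ht
    have hexp : HasDerivAt (fun s : ℝ => Real.exp (δ * s)) (Real.exp (δ * t) * δ) t := by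
      simpa [mul_comm] using (((hasDerivAt_id t).const_mul δ).exp)
    have := hexp.smul (hf_deriv t ht)
    convert this using 1
    · rfl
    simp only [hg, map_smul, smul_smul]
    rw [smul_neg]
    have : δ * Real.exp (δ * t) = Real.exp (δ * t) * δ := mul_comm _ _
    rw [this]
    abel
  -- the squared norm h and monotonicity
  set h : ℝ → ℝ := fun t => ⟪g t, g t⟫ with hh
  have hh_deriv : ∀ t ∈ I, HasDerivAt h (2 * ⟪δ • g t - A (g t), g t⟫) t := by
    intro t ht
    have := (hg_deriv t ht).inner ℝ (hg_deriv t ht)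
    convert this using 1
    · rfl
    · rfl
    rw [real_inner_comm (g t)]
    ring
  have hderiv_nonpos : ∀ t ∈ I, 2 * ⟪δ • g t - A (g t), g t⟫ ≤ 0 := by
    intro t ht
    have h1 : ⟪δ • g t - A (g t), g t⟫ = δ * ‖g t‖ ^ 2 - ⟪A (g t), g t⟫ := by
      rw [inner_sub_left, real_inner_smul_left, real_inner_self_eq_norm_sq]
    have h2 := hcoer (g t)
    nlinarith
  have h_anti : AntitoneOn h I := by
    apply antitoneOn_of_deriv_nonpos (convex_Icc 0 T)
    · exact fun t ht => ((hh_deriv t ht).continuousAt).continuousWithinAt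
    · intro t ht
      rw [interior_Icc] at ht
      exact ((hh_deriv t (Set.mem_Icc_of_Ioo ht)).differentiableAt).differentiableWithinAt
    · intro t ht
      rw [interior_Icc] at ht
      rw [(hh_deriv t (Set.mem_Icc_of_Ioo ht)).deriv]
      exact hderiv_nonpos t (Set.mem_Icc_of_Ioo ht)
  have hf0 : f 0 = e := by
    simp [hf, hu, hw0, hs0 k]
  have hg0 : g 0 = e := by simp [hg, hf0]
  -- pointwise bound on ‖f t‖
  have hfbound : ∀ t ∈ I, ‖f t‖ ≤ Real.exp (-δ * t) * ‖e‖ := by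
    intro t ht
    have h0I : (0 : ℝ) ∈ I := Set.left_mem_Icc.mpr hTle
    have hle : h t ≤ h 0 := h_anti h0I ht ht.1
    have hgt : ‖g t‖ ^ 2 ≤ ‖e‖ ^ 2 := by
      have e1 : h t = ‖g t‖ ^ 2 := real_inner_self_eq_norm_sq _
      have e2 : h 0 = ‖e‖ ^ 2 := by
        show ⟪g 0, g 0⟫ = ‖e‖ ^ 2
        rw [hg0]; exact real_inner_self_eq_norm_sq _
      rw [e1, e2] at hle; exact hle
    have hgle : ‖g t‖ ≤ ‖e‖ := by
      nlinarith [norm_nonneg (g t), norm_nonneg e]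
    have hgnorm : ‖g t‖ = Real.exp (δ * t) * ‖f t‖ := by
      rw [hg]; simp [norm_smul, Real.abs_exp]
    rw [hgnorm] at hgle
    have hexp_pos : 0 < Real.exp (δ * t) := Real.exp_pos _
    rw [neg_mul, Real.exp_neg]
    rw [inv_mul_eq_div, le_div_iff₀ hexp_pos]
    linarith [hgle]
  -- integrability facts
  have hwcont : ContinuousOn w I := fun t ht => ((hwdiff t ht).continuousAt).continuousWithinAt
  have int_ωw : IntervalIntegrable (fun t => ω t • w t) MeasureTheory.volume 0 T :=
    (hωc.smul hwcont).intervalIntegrable_of_Icc hTle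
  have int_ωf : IntervalIntegrable (fun t => ω t • f t) MeasureTheory.volume 0 T :=
    (hωc.smul hf_cont).intervalIntegrable_of_Icc hTle
  have int_ωw' : IntervalIntegrable (fun t => ω t • deriv w t) MeasureTheory.volume 0 T :=
    (hωc.smul hwc).intervalIntegrable_of_Icc hTle
  -- key identity: φs (k+1) - φ = ∫ ω • f
  have key : φs (k + 1) - φ = ∫ t in (0 : ℝ)..T, ω t • f t := by
    have E0 : (∫ t in (0 : ℝ)..T, ω t • deriv (ws k) t)
        = (∫ t in (0 : ℝ)..T, (ω t • f t + ω t • deriv w t)) := by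
      apply intervalIntegral.integral_congr
      intro t ht
      rw [huIcc] at ht
      show ω t • deriv (ws k) t = ω t • f t + ω t • deriv w t
      have : deriv (ws k) t = f t + deriv w t := by
        have := (hu_deriv t ht).deriv
        have hd : deriv u t = deriv (ws k) t - deriv w t :=
          deriv_sub (hsdiff k t ht) (hwdiff t ht)
        rw [hd] at this
        linear_combination (norm := abel) this
      rw [this, smul_add]
    have E1 : (∫ t in (0 : ℝ)..T, (ω t • f t + ω t • deriv w t))
        = (∫ t in (0 : ℝ)..T, ω t • f t) + ∫ t in (0 : ℝ)..T, ω t • deriv w t :=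
      intervalIntegral.integral_add int_ωf int_ωw'
    have E2 : (∫ t in (0 : ℝ)..T, ω t • deriv w t) = φ - A ψ := by
      have e1 : (∫ t in (0 : ℝ)..T, ω t • deriv w t)
          = ∫ t in (0 : ℝ)..T, (ω t • φ - ω t • A (w t)) := by
        apply intervalIntegral.integral_congr
        intro t ht
        rw [huIcc] at ht
        show ω t • deriv w t = ω t • φ - ω t • A (w t)
        have : deriv w t = φ - A (w t) := by
          have := hweq t ht; linear_combination (norm := abel) this
        rw [this, smul_sub]
      have int_ωφ : IntervalIntegrable (fun t => ω t • φ) MeasureTheory.volume 0 T :=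
        (hωc.smul continuousOn_const).intervalIntegrable_of_Icc hTle
      have int_ωAw : IntervalIntegrable (fun t => ω t • A (w t)) MeasureTheory.volume 0 T :=
        (hωc.smul (A.continuous.comp_continuousOn hwcont)).intervalIntegrable_of_Icc hTle
      have e2 : (∫ t in (0 : ℝ)..T, (ω t • φ - ω t • A (w t)))
          = (∫ t in (0 : ℝ)..T, ω t • φ) - ∫ t in (0 : ℝ)..T, ω t • A (w t) :=
        intervalIntegral.integral_sub int_ωφ int_ωAw
      have e3 : (∫ t in (0 : ℝ)..T, ω t • φ) = φ := by
        rw [intervalIntegral.integral_smul_const, hωint, one_smul]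
      have e4 : (∫ t in (0 : ℝ)..T, ω t • A (w t)) = A ψ := by
        have : (∫ t in (0 : ℝ)..T, ω t • A (w t))
            = ∫ t in (0 : ℝ)..T, A (ω t • w t) := by
          apply intervalIntegral.integral_congr
          intro t ht
          show ω t • A (w t) = A (ω t • w t)
          rw [map_smul]
        rw [this, A.intervalIntegral_comp_comm int_ωw, hwover]
      rw [e1, e2, e3, e4]
    rw [hiter k, E0, E1, E2]
    abel
  -- final estimate
  rw [key]
  have hbound : ‖∫ t in (0 : ℝ)..T, ω t • f t‖
      ≤ ∫ t in (0 : ℝ)..T, ω t * Real.exp (-δ * t) * ‖e‖ := by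
    have int_rhs : IntervalIntegrable (fun t => ω t * Real.exp (-δ * t) * ‖e‖)
        MeasureTheory.volume 0 T := by
      apply ContinuousOn.intervalIntegrable_of_Icc hTle
      exact (hωc.mul ((Real.continuous_exp.comp (continuous_const.mul continuous_id)).continuousOn)).mul continuousOn_const
    have h1 := intervalIntegral.norm_integral_le_integral_norm
      (f := fun t => ω t • f t) (μ := MeasureTheory.volume) hTle
    refine h1.trans ?_
    apply intervalIntegral.integral_mono_on hTle ?_ int_rhs
    · intro t ht
      have hω := hωpos t ht
      rw [norm_smul, Real.norm_eq_abs, abs_of_nonneg hω]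
      calc ω t * ‖f t‖ ≤ ω t * (Real.exp (-δ * t) * ‖e‖) :=
            mul_le_mul_of_nonneg_left (hfbound t ht) hω
        _ = ω t * Real.exp (-δ * t) * ‖e‖ := by ring
    · exact (int_ωf.norm)
  refine hbound.trans_eq ?_
  rw [hϱ, ← intervalIntegral.integral_mul_const]
end

section
/- Let β : ℝ → ℝ be differentiable on [0,T] with β'(t) ≥ 0 for all t ∈ [0,T], β(0) ≥ 0 and β(T) = 1. Let η ∈ V and let v : ℝ → V be differentiable on [0,T] with v'(t) + A v(t) = β'(t) · η for t ∈ [0,T] and v(0) = β(0) · η. Then ‖v(T)‖ ≤ (1 − β(0) · (1 − exp(−δ T))) · ‖η‖. -/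
open RealInnerProductSpace

/-- Decay estimate for the semigroup generated by `-A`. -/
lemma exp_neg_decay {V : Type*} [NormedAddCommGroup V] [InnerProductSpace ℝ V]
    [FiniteDimensional ℝ V]
    (A : V →L[ℝ] V) (δ : ℝ) (hδ : 0 < δ) (hcoer : ∀ v : V, δ * ‖v‖ ^ 2 ≤ ⟪A v, v⟫)
    (x : V) {s : ℝ} (hs : 0 ≤ s) :
    ‖(NormedSpace.exp (s • (-A))) x‖ ≤ Real.exp (-(δ * s)) * ‖x‖ := by
  haveI : CompleteSpace V := FiniteDimensional.complete ℝ V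
  set p : ℝ → V := fun u => (NormedSpace.exp (u • (-A))) x with hp_def
  have hp : ∀ u : ℝ, HasDerivAt p (-(A (p u))) u := by
    intro u
    have h1 := hasDerivAt_exp_smul_const' (𝕂 := ℝ) (-A) u
    have h2 := h1.clm_apply (hasDerivAt_const u x)
    simp only [map_zero, add_zero, ContinuousLinearMap.mul_apply,
      ContinuousLinearMap.neg_apply] at h2
    exact h2
  set φ : ℝ → ℝ := fun u => Real.exp (2 * δ * u) * ⟪p u, p u⟫ with hφ_def
  have hφ : ∀ u : ℝ, HasDerivAt φ
      (Real.exp (2 * δ * u) * (2 * δ) * ⟪p u, p u⟫ +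
        Real.exp (2 * δ * u) * (⟪p u, -(A (p u))⟫ + ⟪-(A (p u)), p u⟫)) u := by
    intro u
    have he : HasDerivAt (fun u : ℝ => Real.exp (2 * δ * u)) (Real.exp (2 * δ * u) * (2 * δ)) u := by
      simpa using ((hasDerivAt_id u).const_mul (2 * δ)).exp
    have hi : HasDerivAt (fun u => ⟪p u, p u⟫) (⟪p u, -(A (p u))⟫ + ⟪-(A (p u)), p u⟫) u :=
      (hp u).inner ℝ (hp u)
    exact he.mul hi
  have hderiv_nonpos : ∀ u : ℝ, deriv φ u ≤ 0 := by
    intro u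
    rw [(hφ u).deriv]
    have h1 : ⟪p u, p u⟫ = ‖p u‖ ^ 2 := real_inner_self_eq_norm_sq (p u)
    have h2 : ⟪p u, -(A (p u))⟫ = -⟪A (p u), p u⟫ := by
      rw [inner_neg_right, real_inner_comm]
    have h3 : ⟪-(A (p u)), p u⟫ = -⟪A (p u), p u⟫ := by rw [inner_neg_left]
    have h4 := hcoer (p u)
    have h5 := (Real.exp_pos (2 * δ * u)).le
    rw [h1, h2, h3]
    nlinarith [mul_le_mul_of_nonneg_left h4 h5]
  have hanti : Antitone φ :=
    antitone_of_deriv_nonpos (fun u => (hφ u).differentiableAt) hderiv_nonpos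
  have hle : φ s ≤ φ 0 := hanti hs
  have hp0 : p 0 = x := by simp [hp_def]
  have hφ0 : φ 0 = ‖x‖ ^ 2 := by
    simp [hφ_def, hp0, real_inner_self_eq_norm_sq]
  have hφs : φ s = Real.exp (2 * δ * s) * ‖p s‖ ^ 2 := by
    simp [hφ_def, real_inner_self_eq_norm_sq]
  -- from exp(2δs) ‖p s‖² ≤ ‖x‖² deduce ‖p s‖ ≤ exp(-δs) ‖x‖
  have key : Real.exp (2 * δ * s) * ‖p s‖ ^ 2 ≤ ‖x‖ ^ 2 := by
    rw [← hφs, ← hφ0]; exact hle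
  have hE : Real.exp (2 * δ * s) = Real.exp (δ * s) * Real.exp (δ * s) := by
    rw [← Real.exp_add]; ring_nf
  have hEpos : 0 < Real.exp (δ * s) := Real.exp_pos _
  have hsq : (Real.exp (δ * s) * ‖p s‖) ^ 2 ≤ ‖x‖ ^ 2 := by
    calc (Real.exp (δ * s) * ‖p s‖) ^ 2 = Real.exp (2 * δ * s) * ‖p s‖ ^ 2 := by
          rw [hE]; ring
      _ ≤ ‖x‖ ^ 2 := key
  have habs : Real.exp (δ * s) * ‖p s‖ ≤ ‖x‖ := by
    nlinarith [norm_nonneg (p s), norm_nonneg x, mul_nonneg hEpos.le (norm_nonneg (p s))]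
  have hfin : ‖p s‖ ≤ (Real.exp (δ * s))⁻¹ * ‖x‖ := by
    rw [inv_mul_eq_div, le_div_iff₀ hEpos, mul_comm]
    exact habs
  calc ‖p s‖ ≤ (Real.exp (δ * s))⁻¹ * ‖x‖ := hfin
    _ = Real.exp (-(δ * s)) * ‖x‖ := by rw [Real.exp_neg]

/-- Key a priori estimate behind Theorem 4: if `v' + A v = β'(t) η` on `[0,T]` with
`v(0) = β(0) η` for a nondecreasing `β` with `β(0) ≥ 0`, `β(T) = 1`, then
`‖v(T)‖ ≤ (1 - β(0)(1 - exp(-δ T))) ‖η‖`. -/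
theorem stmt_13 {V : Type*} [NormedAddCommGroup V] [InnerProductSpace ℝ V]
    [FiniteDimensional ℝ V]
    (A : V →L[ℝ] V) (hA : ∀ x y : V, ⟪A x, y⟫ = ⟪x, A y⟫)
    (δ : ℝ) (hδ : 0 < δ) (hcoer : ∀ v : V, δ * ‖v‖ ^ 2 ≤ ⟪A v, v⟫)
    (T : ℝ) (hT : 0 < T)
    (β : ℝ → ℝ)
    (hβdiff : ∀ t ∈ Set.Icc (0 : ℝ) T, DifferentiableAt ℝ β t)
    (hβ' : ∀ t ∈ Set.Icc (0 : ℝ) T, 0 ≤ deriv β t)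
    (hβ0 : 0 ≤ β 0) (hβT : β T = 1)
    (η : V) (v : ℝ → V)
    (hvdiff : ∀ t ∈ Set.Icc (0 : ℝ) T, DifferentiableAt ℝ v t)
    (hveq : ∀ t ∈ Set.Icc (0 : ℝ) T, deriv v t + A (v t) = deriv β t • η)
    (hv0 : v 0 = β 0 • η) :
    ‖v T‖ ≤ (1 - β 0 * (1 - Real.exp (-δ * T))) * ‖η‖ := by
  haveI : CompleteSpace V := FiniteDimensional.complete ℝ V
  set F : ℝ → (V →L[ℝ] V) := fun t => NormedSpace.exp ((t - T) • A) with hF_def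
  have hFderiv : ∀ t : ℝ, HasDerivAt F (F t * A) t := by
    intro t
    have h1 := hasDerivAt_exp_smul_const (𝕂 := ℝ) A (t - T)
    have h2 : HasDerivAt (fun u : ℝ => u - T) 1 t := (hasDerivAt_id t).sub_const T
    have h3 := HasDerivAt.scomp t h1 h2
    simp at h3
    exact h3
  set g : ℝ → V := fun t => F t (v t) with hg_def
  have hgderiv : ∀ t ∈ Set.Icc (0 : ℝ) T, HasDerivAt g (deriv β t • F t η) t := by
    intro t ht
    have hv := (hvdiff t ht).hasDerivAt
    have h1 := (hFderiv t).clm_apply hv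
    have h2 : (F t * A) (v t) + F t (deriv v t) = deriv β t • F t η := by
      rw [ContinuousLinearMap.mul_apply, ← map_add]
      rw [add_comm, hveq t ht, map_smul]
    rwa [h2] at h1
  -- rewriting F in decay-friendly form
  have hFdecay : ∀ t ∈ Set.Icc (0 : ℝ) T, ∀ x : V,
      ‖F t x‖ ≤ Real.exp (-(δ * (T - t))) * ‖x‖ := by
    intro t ht x
    have hrw : (t - T) • A = (T - t) • (-A) := by
      rw [smul_neg, ← neg_smul]; ring_nf
    rw [hF_def]
    simp only [hrw]
    exact exp_neg_decay A δ hδ hcoer x (by linarith [ht.2])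
  -- the fencing estimate for `g t - g 0`
  have hgcont : ContinuousOn g (Set.Icc 0 T) := fun t ht =>
    ((hgderiv t ht).continuousAt).continuousWithinAt
  have hβcont : ContinuousOn β (Set.Icc 0 T) := fun t ht =>
    ((hβdiff t ht).continuousAt).continuousWithinAt
  have fence : ‖g T - g 0‖ ≤ (β T - β 0) * ‖η‖ := by
    have h := image_norm_le_of_norm_deriv_right_le_deriv_boundary'
      (f := fun t => g t - g 0) (f' := fun t => deriv β t • F t η)
      (a := 0) (b := T)
      (hgcont.sub continuousOn_const)
      (fun x hx => ((hgderiv x (Set.mem_Icc_of_Ico hx)).sub_const (g 0)).hasDerivWithinAt)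
      (B := fun t => (β t - β 0) * ‖η‖) (B' := fun t => deriv β t * ‖η‖)
      (by simp)
      ((hβcont.sub continuousOn_const).mul continuousOn_const)
      (fun x hx => (((hβdiff x (Set.mem_Icc_of_Ico hx)).hasDerivAt.sub_const
        (β 0)).hasDerivWithinAt).mul_const ‖η‖)
      (fun x hx => by
        have hx' := Set.mem_Icc_of_Ico hx
        rw [norm_smul, Real.norm_eq_abs, abs_of_nonneg (hβ' x hx')]
        have h1 : ‖F x η‖ ≤ ‖η‖ := by
          refine (hFdecay x hx' η).trans ?_
          have : Real.exp (-(δ * (T - x))) ≤ 1 := by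
            rw [Real.exp_le_one_iff]
            nlinarith [hx'.1, hx'.2, hδ.le]
          nlinarith [norm_nonneg η]
        exact mul_le_mul_of_nonneg_left h1 (hβ' x hx'))
      (Set.right_mem_Icc.mpr hT.le)
    simpa using h
  have hgT : g T = v T := by
    simp [hg_def, hF_def, NormedSpace.exp_zero]
  have hg0 : ‖g 0‖ ≤ β 0 * (Real.exp (-(δ * T)) * ‖η‖) := by
    have h1 : g 0 = β 0 • F 0 η := by
      rw [hg_def]; simp only [hv0, map_smul]
    rw [h1, norm_smul, Real.norm_eq_abs, abs_of_nonneg hβ0]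
    have h2 := hFdecay 0 (Set.mem_Icc.mpr ⟨le_refl 0, hT.le⟩) η
    simp only [sub_zero] at h2
    exact mul_le_mul_of_nonneg_left h2 hβ0
  have := norm_sub_norm_le (g T) (g 0)
  have htri : ‖v T‖ ≤ ‖g T - g 0‖ + ‖g 0‖ := by
    rw [← hgT]
    calc ‖g T‖ = ‖(g T - g 0) + g 0‖ := by rw [sub_add_cancel]
      _ ≤ ‖g T - g 0‖ + ‖g 0‖ := norm_add_le _ _
  have hfinal : ‖g T - g 0‖ + ‖g 0‖ ≤ (1 - β 0 * (1 - Real.exp (-δ * T))) * ‖η‖ := by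
    have h1 : (β T - β 0) * ‖η‖ = (1 - β 0) * ‖η‖ := by rw [hβT]
    have h2 : Real.exp (-(δ * T)) = Real.exp (-δ * T) := by ring_nf
    rw [h2] at hg0
    calc ‖g T - g 0‖ + ‖g 0‖ ≤ (1 - β 0) * ‖η‖ + β 0 * (Real.exp (-δ * T) * ‖η‖) := by
          rw [← h1]; exact add_le_add fence hg0
      _ = (1 - β 0 * (1 - Real.exp (-δ * T))) * ‖η‖ := by ring
  linarith
end

section
/- (Theorem 4.) Let β : ℝ → ℝ be differentiable on [0,T] with β(t) > 0 and β'(t) ≥ 0 for all t ∈ [0,T], and β(T) = 1; set ϱ = 1 − β(0) · (1 − exp(−δ T)), so ϱ < 1. Let φ, φ̂, ψ ∈ V and let w : ℝ → V be differentiable on [0,T] with differentiable derivative, w'(t) + A w(t) = β(t) · φ for t ∈ [0,T], w(0) = φ̂ and w(T) = ψ. Let (φ^k)_{k∈ℕ} in V and functions w^k : ℝ → V be such that for every k: w^k is differentiable on [0,T] with differentiable derivative, (w^k)'(t) + A w^k(t) = β(t) · φ^k for t ∈ [0,T], w^k(0) = φ̂, and φ^{k+1} = (w^k)'(T) + A ψ.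 Then for every k ∈ ℕ, ‖φ^{k+1} − φ‖ ≤ ϱ · ‖φ^k − φ‖. -/
open RealInnerProductSpace

/-- Energy estimate for `g t = β t • η - A (v t)` where `v' = g`, `v 0 = 0`. -/
lemma aux_energy_14 {V : Type*} [NormedAddCommGroup V] [InnerProductSpace ℝ V]
    (A : V →L[ℝ] V) (δ : ℝ) (hδ : 0 < δ)
    (hcoer : ∀ u : V, δ * ‖u‖ ^ 2 ≤ ⟪A u, u⟫)
    (T : ℝ) (hT : 0 < T) (β : ℝ → ℝ)
    (hβdiff : ∀ t ∈ Set.Icc (0:ℝ) T, DifferentiableAt ℝ β t)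
    (hβ' : ∀ t ∈ Set.Icc (0:ℝ) T, 0 ≤ deriv β t)
    (hβ0pos : 0 < β 0)
    (hβmono : ∀ t ∈ Set.Icc (0:ℝ) T, β 0 ≤ β t)
    (η : V) (v : ℝ → V) (hv0 : v 0 = 0)
    (hv : ∀ t ∈ Set.Icc (0:ℝ) T, HasDerivAt v (β t • η - A (v t)) t) :
    ‖β T • η - A (v T)‖ ≤ (β 0 * Real.exp (-δ * T) + (β T - β 0)) * ‖η‖ := by
  set N : ℝ := ‖η‖ with hNdef
  have hN0 : 0 ≤ N := norm_nonneg _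
  set g : ℝ → V := fun t => β t • η - A (v t) with hgdef
  have hg : ∀ t ∈ Set.Icc (0:ℝ) T, HasDerivAt g (deriv β t • η - A (g t)) t := by
    intro t ht
    exact ((hβdiff t ht).hasDerivAt.smul_const η).sub
      (A.hasFDerivAt.comp_hasDerivAt t (hv t ht))
  set f : ℝ → ℝ := fun t => ⟪g t, g t⟫ with hfdef
  set f' : ℝ → ℝ := fun t => 2 * ⟪deriv β t • η - A (g t), g t⟫ with hf'def
  have hf : ∀ t ∈ Set.Icc (0:ℝ) T, HasDerivAt f (f' t) t := by
    intro t ht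
    have h := (hg t ht).inner ℝ (hg t ht)
    refine h.congr_deriv ?_
    simp only [hf'def]
    rw [real_inner_comm]
    ring
  have hfcont : ContinuousOn f (Set.Icc 0 T) :=
    fun t ht => ((hf t ht).continuousAt).continuousWithinAt
  set G : ℝ → ℝ := fun t => β 0 * Real.exp (-δ * t) * N + (β t - β 0) * N with hGdef
  set G' : ℝ → ℝ := fun t => β 0 * (Real.exp (-δ * t) * (-δ)) * N + deriv β t * N with hG'def
  have hG : ∀ t ∈ Set.Icc (0:ℝ) T, HasDerivAt G (G' t) t := by
    intro t ht
    have h1 : HasDerivAt (fun s : ℝ => Real.exp (-δ * s)) (Real.exp (-δ * t) * (-δ)) t := by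
      simpa using ((hasDerivAt_id t).const_mul (-δ)).exp
    exact ((h1.const_mul (β 0)).mul_const N).add
      (((hβdiff t ht).hasDerivAt.sub_const (β 0)).mul_const N)
  have hGnonneg : ∀ t ∈ Set.Icc (0:ℝ) T, 0 ≤ G t := by
    intro t ht
    have h1 : 0 ≤ β 0 * Real.exp (-δ * t) * N :=
      mul_nonneg (mul_nonneg hβ0pos.le (Real.exp_pos _).le) hN0
    have h2 : 0 ≤ (β t - β 0) * N := mul_nonneg (sub_nonneg.2 (hβmono t ht)) hN0
    simpa [hGdef] using add_nonneg h1 h2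
  have key : ∀ ε > (0:ℝ), ‖g T‖ ≤ G T + ε := by
    intro ε hε
    set B : ℝ → ℝ := fun t => (G t + ε) ^ 2 with hBdef
    set B' : ℝ → ℝ := fun t => (2 : ℕ) * (G t + ε) ^ 1 * G' t with hB'def
    have hB : ∀ t ∈ Set.Icc (0:ℝ) T, HasDerivAt B (B' t) t := by
      intro t ht
      exact ((hG t ht).add_const ε).pow 2
    have hfT : f T ≤ B T := by
      have hImage : ∀ ⦃x⦄, x ∈ Set.Icc (0:ℝ) T → f x ≤ B x := by
        apply image_le_of_deriv_right_lt_deriv_boundary' (f' := f') hfcont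
          (fun x hx => (hf x (Set.Ico_subset_Icc_self hx)).hasDerivWithinAt)
          ?ha (fun t ht => ((hB t ht).continuousAt).continuousWithinAt)
          (fun x hx => (hB x (Set.Ico_subset_Icc_self hx)).hasDerivWithinAt)
          ?bound
        case ha =>
          have hg0 : g 0 = β 0 • η := by simp [hgdef, hv0]
          have hG0 : G 0 = β 0 * N := by simp [hGdef]
          have : f 0 = (β 0 * N) ^ 2 := by
            simp only [hfdef, hg0, real_inner_self_eq_norm_sq, norm_smul,
              Real.norm_eq_abs, abs_of_pos hβ0pos, ← hNdef]
          rw [this, hBdef]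
          simp only [hG0]
          nlinarith [mul_nonneg hβ0pos.le hN0]
        case bound =>
          intro x hx hfB
          have hx' : x ∈ Set.Icc (0:ℝ) T := Set.Ico_subset_Icc_self hx
          have hGx : 0 ≤ G x := hGnonneg x hx'
          have hcontact : ‖g x‖ = G x + ε := by
            have h2 : ‖g x‖ ^ 2 = (G x + ε) ^ 2 := by
              rw [← real_inner_self_eq_norm_sq]; exact hfB
            calc ‖g x‖ = Real.sqrt (‖g x‖ ^ 2) := (Real.sqrt_sq (norm_nonneg _)).symm
              _ = Real.sqrt ((G x + ε) ^ 2) := by rw [h2]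
              _ = G x + ε := Real.sqrt_sq (by linarith)
          have hβ'x : 0 ≤ deriv β x := hβ' x hx'
          have hinner : ⟪deriv β x • η - A (g x), g x⟫ ≤
              deriv β x * (N * ‖g x‖) - δ * ‖g x‖ ^ 2 := by
            rw [inner_sub_left, real_inner_smul_left]
            have h1 : ⟪η, g x⟫ ≤ N * ‖g x‖ := real_inner_le_norm η (g x)
            have h2 := hcoer (g x)
            nlinarith [mul_le_mul_of_nonneg_left h1 hβ'x]
          have hmono : β 0 ≤ β x := hβmono x hx'
          have hexp : 0 < Real.exp (-δ * x) := Real.exp_pos _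
          have hGx' : G x = β 0 * Real.exp (-δ * x) * N + (β x - β 0) * N := rfl
          have hQ : (0:ℝ) < (β x - β 0) * N + ε := by
            have := mul_nonneg (sub_nonneg.2 hmono) hN0; linarith
          rw [hcontact] at hinner
          simp only [hf'def, hB'def, hG'def, pow_one, Nat.cast_ofNat]
          rw [hGx'] at hinner ⊢
          have hS : (0:ℝ) < β 0 * Real.exp (-δ * x) * N + (β x - β 0) * N + ε := by
            have := mul_nonneg (mul_nonneg hβ0pos.le hexp.le) hN0; linarith
          nlinarith [mul_pos (mul_pos hδ hS) hQ]
      exact hImage ⟨hT.le, le_refl T⟩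
    have hBT : 0 ≤ G T + ε := by
      have := hGnonneg T ⟨hT.le, le_refl T⟩; linarith
    have : ‖g T‖ ^ 2 ≤ (G T + ε) ^ 2 := by
      rw [← real_inner_self_eq_norm_sq]; exact hfT
    calc ‖g T‖ = Real.sqrt (‖g T‖ ^ 2) := (Real.sqrt_sq (norm_nonneg _)).symm
      _ ≤ Real.sqrt ((G T + ε) ^ 2) := Real.sqrt_le_sqrt this
      _ = G T + ε := Real.sqrt_sq hBT
  have hfinal : ‖g T‖ ≤ G T := by
    apply le_of_forall_sub_le
    intro ε hε
    have := key ε hε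
    linarith
  calc ‖β T • η - A (v T)‖ = ‖g T‖ := rfl
    _ ≤ G T := hfinal
    _ = (β 0 * Real.exp (-δ * T) + (β T - β 0)) * N := by simp [hGdef]; ring

/-- Theorem 4: iterative identification of the spatial factor `φ` of the
multiplicative right-hand side `β(t) φ` of `w' + A w = β φ` from the final
overdetermination `w(T) = ψ` contracts with factor
`ϱ = 1 - β(0)(1 - exp(-δ T)) < 1`. -/
theorem stmt_14 {V : Type*} [NormedAddCommGroup V] [InnerProductSpace ℝ V]
    [FiniteDimensional ℝ V]
    (A : V →L[ℝ] V) (hA : ∀ x y : V, ⟪A x, y⟫ = ⟪x, A y⟫)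
    (δ : ℝ) (hδ : 0 < δ) (hcoer : ∀ v : V, δ * ‖v‖ ^ 2 ≤ ⟪A v, v⟫)
    (T : ℝ) (hT : 0 < T)
    (β : ℝ → ℝ)
    (hβdiff : ∀ t ∈ Set.Icc (0 : ℝ) T, DifferentiableAt ℝ β t)
    (hβpos : ∀ t ∈ Set.Icc (0 : ℝ) T, 0 < β t)
    (hβ' : ∀ t ∈ Set.Icc (0 : ℝ) T, 0 ≤ deriv β t)
    (hβT : β T = 1)
    (ϱ : ℝ) (hϱ : ϱ = 1 - β 0 * (1 - Real.exp (-δ * T)))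
    (φ φhat ψ : V) (w : ℝ → V)
    (hwdiff : ∀ t ∈ Set.Icc (0 : ℝ) T, DifferentiableAt ℝ w t)
    (hwdiff2 : ∀ t ∈ Set.Icc (0 : ℝ) T, DifferentiableAt ℝ (deriv w) t)
    (hweq : ∀ t ∈ Set.Icc (0 : ℝ) T, deriv w t + A (w t) = β t • φ)
    (hw0 : w 0 = φhat) (hwT : w T = ψ)
    (φs : ℕ → V) (ws : ℕ → ℝ → V)
    (hsdiff : ∀ k : ℕ, ∀ t ∈ Set.Icc (0 : ℝ) T, DifferentiableAt ℝ (ws k) t)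
    (hsdiff2 : ∀ k : ℕ, ∀ t ∈ Set.Icc (0 : ℝ) T, DifferentiableAt ℝ (deriv (ws k)) t)
    (hseq : ∀ k : ℕ, ∀ t ∈ Set.Icc (0 : ℝ) T, deriv (ws k) t + A (ws k t) = β t • φs k)
    (hs0 : ∀ k : ℕ, ws k 0 = φhat)
    (hiter : ∀ k : ℕ, φs (k + 1) = deriv (ws k) T + A ψ) :
    ϱ < 1 ∧ ∀ k : ℕ, ‖φs (k + 1) - φ‖ ≤ ϱ * ‖φs k - φ‖ := by
  have hmem0 : (0:ℝ) ∈ Set.Icc (0:ℝ) T := ⟨le_refl 0, hT.le⟩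
  have hmemT : T ∈ Set.Icc (0:ℝ) T := ⟨hT.le, le_refl T⟩
  have hβ0 : 0 < β 0 := hβpos 0 hmem0
  have hexp1 : Real.exp (-δ * T) < 1 := by
    rw [Real.exp_lt_one_iff]
    nlinarith
  have hϱ1 : ϱ < 1 := by rw [hϱ]; nlinarith
  have hβcont : ContinuousOn β (Set.Icc 0 T) :=
    fun t ht => (hβdiff t ht).continuousAt.continuousWithinAt
  have hβmono : ∀ t ∈ Set.Icc (0:ℝ) T, β 0 ≤ β t := by
    intro t ht
    have hm : MonotoneOn β (Set.Icc 0 T) := by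
      apply monotoneOn_of_deriv_nonneg (convex_Icc 0 T) hβcont
      · intro x hx
        rw [interior_Icc] at hx
        exact (hβdiff x ⟨hx.1.le, hx.2.le⟩).differentiableWithinAt
      · intro x hx
        rw [interior_Icc] at hx
        exact hβ' x ⟨hx.1.le, hx.2.le⟩
    exact hm hmem0 ht ht.1
  refine ⟨hϱ1, fun k => ?_⟩
  have hvd : ∀ t ∈ Set.Icc (0:ℝ) T, HasDerivAt (fun s => ws k s - w s)
      (β t • (φs k - φ) - A (ws k t - w t)) t := by
    intro t ht
    have h := ((hsdiff k t ht).hasDerivAt).sub ((hwdiff t ht).hasDerivAt)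
    have e1 : deriv (ws k) t = β t • φs k - A (ws k t) := eq_sub_of_add_eq (hseq k t ht)
    have e2 : deriv w t = β t • φ - A (w t) := eq_sub_of_add_eq (hweq t ht)
    have heq : deriv (ws k) t - deriv w t = β t • (φs k - φ) - A (ws k t - w t) := by
      rw [e1, e2, map_sub, smul_sub]; abel
    rwa [heq] at h
  have hv0 : ws k 0 - w 0 = 0 := by rw [hs0 k, hw0, sub_self]
  have key := aux_energy_14 A δ hδ hcoer T hT β hβdiff hβ' hβ0 hβmono (φs k - φ)
    (fun s => ws k s - w s) hv0 hvd
  have e1 : deriv (ws k) T = β T • φs k - A (ws k T) := eq_sub_of_add_eq (hseq k T hmemT)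
  have e2 : deriv w T = β T • φ - A (w T) := eq_sub_of_add_eq (hweq T hmemT)
  have hφ : φ = deriv w T + A ψ := by rw [e2, hβT, one_smul, hwT]; abel
  have h4 : φs (k+1) - φ = deriv (ws k) T - deriv w T := by
    rw [hiter k, hφ]; abel
  have hlhs : φs (k+1) - φ = β T • (φs k - φ) - A (ws k T - w T) := by
    rw [h4, e1, e2, map_sub, smul_sub]; abel
  rw [hlhs]
  calc ‖β T • (φs k - φ) - A (ws k T - w T)‖
      ≤ (β 0 * Real.exp (-δ * T) + (β T - β 0)) * ‖φs k - φ‖ := key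
    _ = ϱ * ‖φs k - φ‖ := by rw [hβT, hϱ]; ring
end

section
/- Let φ, φ̂, ψ ∈ V and let w : ℝ → V be differentiable on [0,T] with differentiable derivative, satisfying w'(t) + A w(t) = φ for all t ∈ [0,T], w(0) = φ̂ and w(T) = ψ. Then the function v = w' satisfies v'(t) + A v(t) = 0 for all t ∈ [0,T] and the nonlocal condition v(T) − v(0) = A (φ̂ − ψ). -/
/-- Reduction of the inverse source problem with final overdetermination to a
nonlocal problem for the time derivative `v = w'`: `v' + A v = 0` on `[0,T]` and
`v(T) - v(0) = A (φ̂ - ψ)`. -/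
theorem stmt_15 {V : Type*} [NormedAddCommGroup V] [InnerProductSpace ℝ V]
    [FiniteDimensional ℝ V]
    (A : V →L[ℝ] V)
    (T : ℝ) (hT : 0 < T)
    (φ φhat ψ : V) (w : ℝ → V)
    (hwdiff : ∀ t ∈ Set.Icc (0 : ℝ) T, DifferentiableAt ℝ w t)
    (hwdiff2 : ∀ t ∈ Set.Icc (0 : ℝ) T, DifferentiableAt ℝ (deriv w) t)
    (hweq : ∀ t ∈ Set.Icc (0 : ℝ) T, deriv w t + A (w t) = φ)
    (hw0 : w 0 = φhat) (hwT : w T = ψ) :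
    (∀ t ∈ Set.Icc (0 : ℝ) T, deriv (deriv w) t + A (deriv w t) = 0) ∧
      deriv w T - deriv w 0 = A (φhat - ψ) := by
  have hUD := uniqueDiffOn_Icc hT
  have key : ∀ t ∈ Set.Icc (0 : ℝ) T, deriv (deriv w) t = - A (deriv w t) := by
    intro t ht
    have hud := hUD t ht
    have h1 : derivWithin (deriv w) (Set.Icc 0 T) t = deriv (deriv w) t :=
      (hwdiff2 t ht).derivWithin hud
    have heq : Set.EqOn (deriv w) (fun s => φ - A (w s)) (Set.Icc 0 T) := by
      intro s hs
      have := hweq s hs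
      simp [eq_sub_of_add_eq this]
    have h2 : derivWithin (deriv w) (Set.Icc 0 T) t
        = derivWithin (fun s => φ - A (w s)) (Set.Icc 0 T) t :=
      derivWithin_congr heq (heq ht)
    have hw' : HasDerivWithinAt w (deriv w t) (Set.Icc 0 T) t :=
      ((hwdiff t ht).hasDerivAt).hasDerivWithinAt
    have hA : HasDerivWithinAt (fun s => A (w s)) (A (deriv w t)) (Set.Icc 0 T) t :=
      A.hasFDerivAt.comp_hasDerivWithinAt t hw'
    have h3 : HasDerivWithinAt (fun s => φ - A (w s)) (0 - A (deriv w t)) (Set.Icc 0 T) t :=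
      (hasDerivWithinAt_const t _ φ).sub hA
    rw [← h1, h2, h3.derivWithin hud]
    simp
  refine ⟨fun t ht => by rw [key t ht]; simp, ?_⟩
  have e0 := hweq 0 ⟨le_refl 0, hT.le⟩
  have eT := hweq T ⟨hT.le, le_refl T⟩
  rw [hw0] at e0
  rw [hwT] at eT
  rw [eq_sub_of_add_eq e0, eq_sub_of_add_eq eT, map_sub]
  abel
end
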